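/- Let κ be a tight Feller kernel on a metric space Ω with inf_{x∈Ω} κ(Ω,x) > 0. Then κ is a comparability kernel. -/

import Mathlib

open MeasureTheory
open scoped ENNReal

/-- A tight Feller kernel κ with inf_x κ(Ω,x) > 0 is a comparability kernel:
for every continuous g : Ω → (0,∞) there is δ > 0 with
∫ g dκ(·,x) ≥ δ·κ(Ω,x) for all x. -/
theorem stmt18 {Ω : Type*} [MetricSpace Ω] [MeasurableSpace Ω] [BorelSpace Ω]
    (κ : Ω → Measure Ω) [∀ x, IsFiniteMeasure (κ x)]
    (hbdd : ∃ B : ℝ≥0∞, B ≠ ⊤ ∧ ∀ x, κ x Set.univ ≤ B)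
    (hFeller : ∀ g : Ω → ℝ, Continuous g → (∃ C, ∀ x, |g x| ≤ C) →
      Continuous (fun x => ∫ ξ, g ξ ∂ κ x))
    (htight : ∀ ε : ℝ, 0 < ε → ∃ W : Set Ω, IsCompact W ∧
      ∀ x, κ x Wᶜ < ENNReal.ofReal ε)
    (hinf : ∃ c : ℝ, 0 < c ∧ ∀ x, ENNReal.ofReal c ≤ κ x Set.univ) :
    ∀ g : Ω → ℝ, Continuous g → (∀ x, 0 < g x) →
      ∃ δ : ℝ, 0 < δ ∧ ∀ x,
        ENNReal.ofReal δ * κ x Set.univ ≤ ∫⁻ ξ, ENNReal.ofReal (g ξ) ∂ κ x := by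
  intro g hg hgpos
  cases isEmpty_or_nonempty Ω with
  | inl h => exact ⟨1, one_pos, fun x => isEmptyElim x⟩
  | inr h =>
    obtain ⟨c, hc, hcκ⟩ := hinf
    obtain ⟨W, hWc, hWκ⟩ := htight (c / 2) (by linarith)
    -- W is nonempty
    have hWne : W.Nonempty := by
      by_contra hne
      rw [Set.not_nonempty_iff_eq_empty] at hne
      obtain ⟨x₀⟩ := h
      have h1 := hWκ x₀
      rw [hne, Set.compl_empty] at h1
      have h2 := hcκ x₀
      have : ENNReal.ofReal c ≤ ENNReal.ofReal (c / 2) := le_of_lt (lt_of_le_of_lt h2 h1)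
      rw [ENNReal.ofReal_le_ofReal_iff (by linarith)] at this
      linarith
    obtain ⟨ξ₀, hξ₀W, hξ₀min⟩ := hWc.exists_isMinOn hWne hg.continuousOn
    set m := g ξ₀ with hm
    have hmpos : 0 < m := hgpos ξ₀
    refine ⟨m / 2, by linarith, fun x => ?_⟩
    -- κ x univ ≤ 2 * κ x W
    have hsplit : κ x W + κ x Wᶜ = κ x Set.univ :=
      measure_add_measure_compl hWc.measurableSet
    have hhalf : ENNReal.ofReal (c / 2) ≤ κ x Set.univ / 2 := by
      rw [ENNReal.le_div_iff_mul_le (by simp) (by simp)]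
      calc ENNReal.ofReal (c / 2) * 2 = ENNReal.ofReal (c / 2 * 2) := by
            rw [ENNReal.ofReal_mul (by linarith)]; norm_num
        _ = ENNReal.ofReal c := by norm_num
        _ ≤ κ x Set.univ := hcκ x
    have hW2 : κ x Set.univ ≤ 2 * κ x W := by
      have hWclt : κ x Wᶜ ≤ κ x Set.univ / 2 := le_trans (le_of_lt (hWκ x)) hhalf
      have h3 : κ x Set.univ ≤ κ x W + κ x Set.univ / 2 := by
        calc κ x Set.univ = κ x W + κ x Wᶜ := hsplit.symm
          _ ≤ κ x W + κ x Set.univ / 2 := add_le_add le_rfl hWclt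
      have hfin : κ x Set.univ / 2 ≠ ⊤ := by
        simp [ENNReal.div_eq_top, measure_ne_top]
      have h4 : κ x Set.univ - κ x Set.univ / 2 ≤ κ x W :=
        tsub_le_iff_right.mpr h3
      have h5 : κ x Set.univ - κ x Set.univ / 2 = κ x Set.univ / 2 := by
        rw [ENNReal.sub_half (measure_ne_top _ _)]
      rw [h5] at h4
      calc κ x Set.univ = 2 * (κ x Set.univ / 2) := by
            rw [ENNReal.mul_div_cancel' (by norm_num) (by norm_num)]
        _ ≤ 2 * κ x W := by gcongr
    -- lower bound for the integral
    have hint : ENNReal.ofReal m * κ x W ≤ ∫⁻ ξ, ENNReal.ofReal (g ξ) ∂ κ x := by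
      calc ENNReal.ofReal m * κ x W = ∫⁻ _ in W, ENNReal.ofReal m ∂ κ x := by
            rw [setLIntegral_const]
        _ ≤ ∫⁻ ξ in W, ENNReal.ofReal (g ξ) ∂ κ x :=
            setLIntegral_mono' hWc.measurableSet
              (fun ξ hξ => ENNReal.ofReal_le_ofReal (hξ₀min hξ))
        _ ≤ ∫⁻ ξ, ENNReal.ofReal (g ξ) ∂ κ x := setLIntegral_le_lintegral _ _
    calc ENNReal.ofReal (m / 2) * κ x Set.univ
        ≤ ENNReal.ofReal (m / 2) * (2 * κ x W) := by gcongr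
      _ = ENNReal.ofReal m * κ x W := by
          rw [← mul_assoc]
          congr 1
          rw [← ENNReal.ofReal_ofNat 2, ← ENNReal.ofReal_mul (by linarith)]
          norm_num
      _ ≤ ∫⁻ ξ, ENNReal.ofReal (g ξ) ∂ κ x := hint
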